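/- In a unimodular cocommutative bialgebra H in a symmetric monoidal category, the morphism S = (id ⊗ (l∘μ)) ∘ (γ ⊗ id) ∘ (id ⊗ (Δ∘L)) satisfies the left antipode axiom: μ ∘ (S ⊗ id) ∘ Δ = η ∘ ε. -/

import Mathlib

open CategoryTheory MonoidalCategory

theorem aux1 {C : Type*} [Category C] [MonoidalCategory C] [SymmetricCategory C]
    (H : C) (d : H ⟶ H ⊗ H) (m : H ⊗ H ⟶ H) (c : 𝟙_ C ⟶ H ⊗ H) (g : H ⊗ H ⟶ 𝟙_ C) :
    d ≫ (H ◁ ((ρ_ H).inv ≫ (H ◁ c) ≫ (α_ H H H).inv ≫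
        ((β_ H H).hom ▷ H) ≫ (α_ H H H).hom ≫ (H ◁ g) ≫ (ρ_ H).hom)) ≫ m
    = (ρ_ H).inv ≫ (d ▷ 𝟙_ C) ≫ ((H ⊗ H) ◁ c) ≫ tensorμ H H H H ≫ (m ⊗ₘ g) ≫ (ρ_ H).hom := by
  rw [tensorμ, tensorHom_def m g]
  simp only [MonoidalCategory.whiskerLeft_comp, Category.assoc, comp_whiskerRight]
  slice_rhs 1 2 => rw [← rightUnitor_inv_naturality]
  slice_rhs 3 4 => rw [associator_naturality_right]
  slice_rhs 9 10 => rw [← whisker_exchange]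
  slice_rhs 10 11 => rw [rightUnitor_naturality]
  slice_rhs 8 9 => rw [← associator_inv_naturality_right]
  simp only [Category.assoc]
  congr 1
  monoidal

theorem aux2 {C : Type*} [Category C] [MonoidalCategory C] [SymmetricCategory C]
    (H : C) (d : H ⟶ H ⊗ H) (m : H ⊗ H ⟶ H) (c : 𝟙_ C ⟶ H ⊗ H) (g : H ⊗ H ⟶ 𝟙_ C) :
    d ≫ (((λ_ H).inv ≫ (c ▷ H) ≫ (α_ H H H).hom ≫
        (H ◁ (β_ H H).hom) ≫ (α_ H H H).inv ≫ (g ▷ H) ≫ (λ_ H).hom) ▷ H) ≫ m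
    = (λ_ H).inv ≫ (𝟙_ C ◁ d) ≫ (c ▷ (H ⊗ H)) ≫ tensorμ H H H H ≫ (g ⊗ₘ m) ≫ (λ_ H).hom := by
  rw [tensorμ, tensorHom_def g m]
  simp only [MonoidalCategory.whiskerLeft_comp, Category.assoc, comp_whiskerRight,
    whisker_assoc, whiskerRight_tensor]
  slice_rhs 1 2 => rw [← leftUnitor_inv_naturality]
  slice_rhs 14 15 => rw [leftUnitor_naturality]
  congr 1
  monoidal

/-- In a unimodular cocommutative bialgebra `H` in a symmetric monoidal category,
the morphism `S = (id ⊗ (l∘μ)) ∘ (γ ⊗ id) ∘ (id ⊗ (Δ∘L))` satisfies the left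
antipode axiom `μ ∘ (S ⊗ id) ∘ Δ = η ∘ ε`. -/
theorem left_antipode_of_unimodular_cocomm_bialgebra
    {C : Type*} [Category C] [MonoidalCategory C] [SymmetricCategory C]
    (H : C) (μ : H ⊗ H ⟶ H) (η : 𝟙_ C ⟶ H) (Δ : H ⟶ H ⊗ H) (ε : H ⟶ 𝟙_ C)
    (l : H ⟶ 𝟙_ C) (L : 𝟙_ C ⟶ H)
    (mul_assoc' : (μ ▷ H) ≫ μ = (α_ H H H).hom ≫ (H ◁ μ) ≫ μ)
    (one_mul' : (η ▷ H) ≫ μ = (λ_ H).hom)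
    (mul_one' : (H ◁ η) ≫ μ = (ρ_ H).hom)
    (comul_assoc' : Δ ≫ (Δ ▷ H) ≫ (α_ H H H).hom = Δ ≫ (H ◁ Δ))
    (counit_comul' : Δ ≫ (ε ▷ H) = (λ_ H).inv)
    (comul_counit' : Δ ≫ (H ◁ ε) = (ρ_ H).inv)
    (mul_comul' : μ ≫ Δ = (Δ ⊗ₘ Δ) ≫ tensorμ H H H H ≫ (μ ⊗ₘ μ))
    (mul_counit' : μ ≫ ε = (ε ⊗ₘ ε) ≫ (λ_ (𝟙_ C)).hom)
    (one_comul' : η ≫ Δ = (λ_ (𝟙_ C)).inv ≫ (η ⊗ₘ η))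
    (one_counit' : η ≫ ε = 𝟙 (𝟙_ C))
    (cocomm : Δ ≫ (β_ H H).hom = Δ)
    (cointegral_l : Δ ≫ (l ▷ H) ≫ (λ_ H).hom = l ≫ η)
    (cointegral_r : Δ ≫ (H ◁ l) ≫ (ρ_ H).hom = l ≫ η)
    (integral_l : (L ▷ H) ≫ μ = (λ_ H).hom ≫ ε ≫ L)
    (integral_r : (H ◁ L) ≫ μ = (ρ_ H).hom ≫ ε ≫ L)
    (normalization : L ≫ l = 𝟙 (𝟙_ C)) :
    Δ ≫ (((ρ_ H).inv ≫ (H ◁ (L ≫ Δ)) ≫ (α_ H H H).inv ≫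
        ((β_ H H).hom ▷ H) ≫ (α_ H H H).hom ≫ (H ◁ (μ ≫ l)) ≫ (ρ_ H).hom) ▷ H) ≫ μ
      = ε ≫ η := by
  set M : ComonObj H := ⟨ε, Δ, counit_comul', comul_counit', comul_assoc'.symm⟩ with hM
  set N : MonObj H := ⟨η, μ, one_mul', mul_one', mul_assoc'⟩ with hN
  set S : H ⟶ H := (ρ_ H).inv ≫ (H ◁ (L ≫ Δ)) ≫ (α_ H H H).inv ≫
      ((β_ H H).hom ▷ H) ≫ (α_ H H H).hom ≫ (H ◁ (μ ≫ l)) ≫ (ρ_ H).hom with hS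
  set T : H ⟶ H := (λ_ H).inv ≫ ((L ≫ Δ) ▷ H) ≫ (α_ H H H).hom ≫
      (H ◁ (β_ H H).hom) ≫ (α_ H H H).inv ≫ ((μ ≫ l) ▷ H) ≫ (λ_ H).hom with hT
  -- right antipode property of S
  have hRight : Δ ≫ (H ◁ S) ≫ μ = ε ≫ η := by
    rw [hS, aux1 H Δ μ (L ≫ Δ) (μ ≫ l)]
    rw [show (μ ⊗ₘ (μ ≫ l)) = (μ ⊗ₘ μ) ≫ (H ◁ l) by
      rw [← id_tensorHom, tensorHom_comp_tensorHom, Category.comp_id]]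
    slice_lhs 3 3 => rw [MonoidalCategory.whiskerLeft_comp]
    slice_lhs 2 3 => rw [← whisker_exchange]
    slice_lhs 3 4 => rw [← MonoidalCategory.tensorHom_def]
    slice_lhs 3 5 => rw [← mul_comul']
    slice_lhs 4 6 => rw [cointegral_r]
    slice_lhs 2 3 => rw [integral_r]
    simp [normalization]
  -- left antipode property of T
  have hLeft : Δ ≫ (T ▷ H) ≫ μ = ε ≫ η := by
    rw [hT, aux2 H Δ μ (L ≫ Δ) (μ ≫ l)]
    rw [show ((μ ≫ l) ⊗ₘ μ) = (μ ⊗ₘ μ) ≫ (l ▷ H) by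
      rw [← tensorHom_id, tensorHom_comp_tensorHom, Category.comp_id]]
    slice_lhs 3 3 => rw [comp_whiskerRight]
    slice_lhs 2 3 => rw [whisker_exchange]
    slice_lhs 3 4 => rw [← MonoidalCategory.tensorHom_def']
    slice_lhs 3 5 => rw [← mul_comul']
    slice_lhs 4 6 => rw [cointegral_l]
    slice_lhs 2 3 => rw [integral_l]
    simp [normalization]
  have key : T = S := by
    refine left_inv_eq_right_inv (M := Conv H H) (a := (𝟙 H : Conv H H)) (b := T) (c := S) ?_ ?_
    · show M.comul ≫ (T ▷ H) ≫ (H ◁ (𝟙 H)) ≫ N.mul = M.counit ≫ N.one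
      show Δ ≫ (T ▷ H) ≫ (H ◁ (𝟙 H)) ≫ μ = ε ≫ η
      rw [MonoidalCategory.whiskerLeft_id]
      simpa using hLeft
    · show M.comul ≫ ((𝟙 H) ▷ H) ≫ (H ◁ S) ≫ N.mul = M.counit ≫ N.one
      show Δ ≫ ((𝟙 H) ▷ H) ≫ (H ◁ S) ≫ μ = ε ≫ η
      rw [MonoidalCategory.id_whiskerRight]
      simpa using hRight
  rw [← key]
  exact hLeft
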